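/- Let R be a Prüfer domain and let φ : E → H be an R-linear map between finitely generated projective R-modules. Set M = H ⧸ range φ. Then the torsion submodule T(M) of M admits a complement: there exists a submodule P of M with T(M) ⊓ P = ⊥, T(M) ⊔ P = M, and P is a projective R-module. In particular M is the direct sum of its torsion submodule and a finitely generated projective module. -/

import Mathlib

open Submodule Set Function

section DualBasis
variable {R : Type*} [CommRing R] [IsDomain R]

/-- division by `c` as a linear map on an ideal, given divisibility. -/
noncomputable def divMap {c : R} (hc : c ≠ 0) {I : Ideal R} {b : R}
    (hb : ∀ x ∈ I, ∃ r, c * r = b * x) : I →ₗ[R] R where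
  toFun x := (hb x x.2).choose
  map_add' x y := by
    apply mul_left_cancel₀ hc
    rw [mul_add, (hb _ (x + y).2).choose_spec, (hb _ x.2).choose_spec,
      (hb _ y.2).choose_spec, Submodule.coe_add, mul_add]
  map_smul' r x := by
    apply mul_left_cancel₀ hc
    simp only [RingHom.id_apply, smul_eq_mul]
    rw [(hb _ (r • x).2).choose_spec, mul_left_comm c r, (hb _ x.2).choose_spec,
      SetLike.val_smul, smul_eq_mul]
    ring

theorem divMap_spec {c : R} (hc : c ≠ 0) {I : Ideal R} {b : R}
    (hb : ∀ x ∈ I, ∃ r, c * r = b * x) (x : I) :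
    c * divMap hc hb x = b * x := (hb x x.2).choose_spec

theorem projective_of_fg_ideal
    (hpruf : ∀ I : Ideal R, I.FG → I ≠ ⊥ →
      ∃ (J : Ideal R) (c : R), J.FG ∧ c ≠ 0 ∧ I * J = Ideal.span {c})
    (I : Ideal R) (hI : I.FG) (hne : I ≠ ⊥) : Module.Projective R I := by
  obtain ⟨J, c, _, hc, hIJ⟩ := hpruf I hI hne
  have hcmem : c ∈ I * J := hIJ ▸ Ideal.mem_span_singleton_self c
  have hrep : ∃ l : List (R × R), (∀ p ∈ l, p.1 ∈ I ∧ p.2 ∈ J) ∧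
      (l.map fun p => p.1 * p.2).sum = c := by
    refine Submodule.mul_induction_on hcmem ?_ ?_
    · intro m hm n hn
      exact ⟨[(m, n)], by simp [hm, hn], by simp⟩
    · rintro x y ⟨l₁, h₁, s₁⟩ ⟨l₂, h₂, s₂⟩
      refine ⟨l₁ ++ l₂, ?_, by simp [s₁, s₂]⟩
      intro p hp
      rcases List.mem_append.mp hp with h | h
      · exact h₁ p h
      · exact h₂ p h
  obtain ⟨l, hl, hsum⟩ := hrep
  set k := l.length with hk
  have hb : ∀ i : Fin k, ∀ x ∈ I, ∃ r, c * r = (l.get i).2 * x := by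
    intro i x hx
    have hmem : (l.get i).2 * x ∈ Ideal.span {c} := by
      rw [← hIJ]
      have h2 := Ideal.mul_mem_mul hx (hl _ (l.get_mem i)).2
      rwa [mul_comm x] at h2
    rw [Ideal.mem_span_singleton'] at hmem
    exact ⟨hmem.choose, by rw [mul_comm]; exact hmem.choose_spec⟩
  let g : I →ₗ[R] (Fin k → R) := LinearMap.pi fun i => divMap hc (hb i)
  let p : (Fin k → R) →ₗ[R] I :=
    ∑ i : Fin k, (LinearMap.toSpanSingleton R I
      ⟨(l.get i).1, (hl _ (l.get_mem i)).1⟩).comp (LinearMap.proj i)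
  refine Module.Projective.of_split g p ?_
  ext x
  have : ((p (g x) : I) : R) = (x : R) := by
    apply mul_left_cancel₀ hc
    have hval : ((p (g x) : I) : R) = ∑ i : Fin k, divMap hc (hb i) x * (l.get i).1 := by
      simp only [p, LinearMap.sum_apply, LinearMap.comp_apply, LinearMap.proj_apply,
        LinearMap.toSpanSingleton_apply, AddSubmonoidClass.coe_finset_sum, SetLike.val_smul,
        smul_eq_mul, g, LinearMap.pi_apply]
    rw [hval, Finset.mul_sum]
    have : ∀ i : Fin k, c * (divMap hc (hb i) x * (l.get i).1)
        = (l.get i).1 * (l.get i).2 * x := by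
      intro i
      rw [← mul_assoc, divMap_spec]
      ring
    rw [Finset.sum_congr rfl fun i _ => this i, ← Finset.sum_mul]
    congr 1
    rw [← hsum]
    conv_rhs => rw [← List.ofFn_get l, List.map_ofFn]
    exact (Fin.sum_ofFn _).symm
  simpa using this

end DualBasis

section Induction
variable {R : Type*} [CommRing R] [IsDomain R]

theorem projective_of_emb {n : ℕ}
    (hIH : ∀ N' : Submodule R (Fin n → R), N'.FG → Module.Projective R ↥N')
    {X : Type*} [AddCommGroup X] [Module R X] [Module.Finite R X]
    (ε : X →ₗ[R] (Fin n → R)) (hε : Function.Injective ε) : Module.Projective R X := by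
  have hfg : (LinearMap.range ε).FG := by
    rw [LinearMap.range_eq_map]
    exact (Module.finite_def.mp ‹Module.Finite R X›).map ε
  have := hIH _ hfg
  exact Module.Projective.of_equiv (LinearEquiv.ofInjective ε hε).symm

set_option synthInstance.maxHeartbeats 1000000 in
theorem projective_of_fg_submodule_pi
    (hpruf : ∀ I : Ideal R, I.FG → I ≠ ⊥ →
      ∃ (J : Ideal R) (c : R), J.FG ∧ c ≠ 0 ∧ I * J = Ideal.span {c}) :
    ∀ (n : ℕ) (N : Submodule R (Fin n → R)), N.FG → Module.Projective R ↥N := by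
  intro n
  induction n with
  | zero =>
    intro N _
    have hsub : Subsingleton ↥N := ⟨fun a b => Subtype.ext (Subsingleton.elim _ _)⟩
    exact Module.Projective.of_split (M := Fin 0 → R) N.subtype 0
      (LinearMap.ext fun x => Subsingleton.elim _ _)
  | succ n IH =>
    intro N hNfg
    haveI : Module.Finite R ↥N := Module.Finite.iff_fg.mpr hNfg
    set π : (Fin (n + 1) → R) →ₗ[R] R := LinearMap.proj (Fin.last n) with hπ
    set J : Ideal R := N.map π with hJdef
    have hJfg : J.FG := hNfg.map π
    by_cases hJ : J = ⊥
    · have hlast : ∀ x ∈ N, x (Fin.last n) = 0 := by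
        intro x hx
        have hm : π x ∈ J := Submodule.mem_map_of_mem hx
        rw [hJ] at hm
        simpa [π] using hm
      let ε : ↥N →ₗ[R] (Fin n → R) := (LinearMap.funLeft R R Fin.castSucc).comp N.subtype
      have hε : Function.Injective ε := by
        intro x y hxy
        apply Subtype.ext
        funext j
        refine Fin.lastCases ?_ ?_ j
        · rw [hlast _ x.2, hlast _ y.2]
        · intro i
          exact congrFun hxy i
      exact projective_of_emb IH ε hε
    · have hJproj : Module.Projective R ↥J := projective_of_fg_ideal hpruf J hJfg hJ
      let π' : ↥N →ₗ[R] ↥J :=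
        LinearMap.codRestrict J (π.comp N.subtype) fun x => Submodule.mem_map_of_mem x.2
      have hπ'surj : Function.Surjective π' := by
        rintro ⟨y, hy⟩
        obtain ⟨x, hx, hxy⟩ := hy
        exact ⟨⟨x, hx⟩, Subtype.ext hxy⟩
      obtain ⟨σ, hσ⟩ := Module.projective_lifting_property π' LinearMap.id hπ'surj
      have hσ' : ∀ b : ↥J, π' (σ b) = b := fun b => congrFun (congrArg DFunLike.coe hσ) b
      set ρ₀ : ↥N →ₗ[R] ↥N := LinearMap.id - σ.comp π' with hρ₀def
      have hρ₀ : ∀ x, π' (ρ₀ x) = 0 := by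
        intro x
        simp [hρ₀def, map_sub, hσ' (π' x)]
      set K := LinearMap.ker π' with hKdef
      let ρ : ↥N →ₗ[R] ↥K := LinearMap.codRestrict K ρ₀ fun x => LinearMap.mem_ker.mpr (hρ₀ x)
      have hρ : ∀ x, (ρ x : ↥N) = x - σ (π' x) := fun x => rfl
      have hρsurj : Function.Surjective ρ := by
        rintro ⟨x, hx⟩
        refine ⟨x, Subtype.ext (Subtype.ext ?_)⟩
        have hx0 : π' x = 0 := LinearMap.mem_ker.mp hx
        show ((ρ₀ x : ↥N) : Fin (n + 1) → R) = x
        rw [show (ρ₀ x : ↥N) = x - σ (π' x) from rfl, hx0, map_zero, sub_zero]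
      haveI : Module.Finite R ↥K := Module.Finite.of_surjective ρ hρsurj
      have hlastK : ∀ x : ↥K, ((x : ↥N) : Fin (n + 1) → R) (Fin.last n) = 0 := by
        intro x
        have h0 : π' (x : ↥N) = 0 := LinearMap.mem_ker.mp x.2
        exact congrArg Subtype.val h0
      let εK : ↥K →ₗ[R] (Fin n → R) :=
        (LinearMap.funLeft R R Fin.castSucc).comp (N.subtype.comp K.subtype)
      have hεK : Function.Injective εK := by
        intro x y hxy
        apply Subtype.ext
        apply Subtype.ext
        funext j
        refine Fin.lastCases ?_ ?_ j
        · rw [hlastK x, hlastK y]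
        · intro i
          exact congrFun hxy i
      have hKproj : Module.Projective R ↥K := projective_of_emb (X := ↥K) IH εK hεK
      let f : ↥N →ₗ[R] ↥K × ↥J := LinearMap.prod ρ π'
      let g : ↥K × ↥J →ₗ[R] ↥N :=
        K.subtype.comp (LinearMap.fst R ↥K ↥J) + σ.comp (LinearMap.snd R ↥K ↥J)
      have hgf : g.comp f = LinearMap.id := by
        apply LinearMap.ext
        intro x
        show (ρ x : ↥N) + σ (π' x) = x
        rw [hρ x, sub_add_cancel]
      have hfg : f.comp g = LinearMap.id := by
        apply LinearMap.ext
        rintro ⟨a, b⟩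
        have hπ'g : π' ((a : ↥N) + σ b) = b := by
          rw [map_add, hσ' b, LinearMap.mem_ker.mp a.2, zero_add]
        refine Prod.ext ?_ ?_
        · apply Subtype.ext
          show ((a : ↥N) + σ b) - σ (π' ((a : ↥N) + σ b)) = (a : ↥N)
          rw [hπ'g, add_sub_cancel_right]
        · exact hπ'g
      have e : (↥K × ↥J) ≃ₗ[R] ↥N := LinearEquiv.ofLinear g f hgf hfg
      exact Module.Projective.of_equiv e

end Induction

section TorsionFree
variable {R : Type*} [CommRing R] [IsDomain R]

theorem exists_emb_free {X : Type*} [AddCommGroup X] [Module R X]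
    [Module.Finite R X] [NoZeroSMulDivisors R X] :
    ∃ (k : ℕ) (ε : X →ₗ[R] (Fin k → R)), Function.Injective ε := by
  classical
  obtain ⟨m, s, hs⟩ := Module.Finite.exists_fin (R := R) (M := X)
  obtain ⟨I, (indepI : LinearIndependent R (fun x : I => s x)), hI⟩ := exists_maximal_linearIndepOn R s
  let N := Submodule.span R (Set.range fun x : I => s x)
  let sI_basis : Module.Basis I R N := Module.Basis.span indepI
  haveI : Fintype I := Set.Finite.fintype (Set.toFinite I)
  have exists_a : ∀ i : Fin m, ∃ a : R, a ≠ 0 ∧ a • s i ∈ N := by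
    intro i
    by_cases hi : i ∈ I
    · exact ⟨1, one_ne_zero, by rw [one_smul]; exact Submodule.subset_span ⟨⟨i, hi⟩, rfl⟩⟩
    · obtain ⟨a, ha, h⟩ := hI i hi
      refine ⟨a, ha, ?_⟩
      rwa [show s '' I = Set.range fun x : I => s x from Set.image_eq_range s I] at h
  choose a ha ha' using exists_a
  set A := ∏ i, a i with hA_def
  have hA : A ≠ 0 := Finset.prod_ne_zero_iff.mpr fun i _ => ha i
  have hrange : ∀ i, A • s i ∈ N := by
    intro i
    rw [hA_def, Fintype.prod_eq_prod_compl_mul i, mul_smul]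
    exact N.smul_mem _ (ha' i)
  let φ : X →ₗ[R] X := LinearMap.lsmul R X A
  have hφle : LinearMap.range φ ≤ N := by
    rw [LinearMap.range_eq_map, ← hs, Submodule.map_span_le]
    rintro _ ⟨i, rfl⟩
    exact hrange i
  have hker : LinearMap.ker φ = ⊥ := LinearMap.ker_lsmul hA
  let φ' : X →ₗ[R] ↥N := LinearMap.codRestrict N φ fun x => hφle (LinearMap.mem_range_self φ x)
  have hinj : Function.Injective φ' := by
    intro x y h
    exact LinearMap.ker_eq_bot.mp hker (congrArg Subtype.val h : φ x = φ y)
  let e : ↥N ≃ₗ[R] (Fin (Fintype.card I) → R) :=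
    sI_basis.repr ≪≫ₗ Finsupp.linearEquivFunOnFinite R R I ≪≫ₗ
      LinearEquiv.funCongrLeft R R (Fintype.equivFin I).symm
  refine ⟨Fintype.card I, e.toLinearMap.comp φ', ?_⟩
  rw [LinearMap.coe_comp]
  exact e.injective.comp hinj

end TorsionFree


/-- Over a Prüfer domain, the cokernel of a linear map between finitely generated
projective modules is the direct sum of its torsion submodule and a projective module. -/
theorem stmt_11 {R : Type*} [CommRing R] [IsDomain R]
    (hpruf : ∀ I : Ideal R, I.FG → I ≠ ⊥ →
      ∃ (J : Ideal R) (c : R), J.FG ∧ c ≠ 0 ∧ I * J = Ideal.span {c})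
    {E H : Type*} [AddCommGroup E] [Module R E] [AddCommGroup H] [Module R H]
    [Module.Finite R E] [Module.Projective R E]
    [Module.Finite R H] [Module.Projective R H]
    (φ : E →ₗ[R] H) :
    ∃ P : Submodule R (H ⧸ LinearMap.range φ),
      Submodule.torsion R (H ⧸ LinearMap.range φ) ⊓ P = ⊥ ∧
      Submodule.torsion R (H ⧸ LinearMap.range φ) ⊔ P = ⊤ ∧
      Module.Projective R ↥P := by
  classical
  set T := Submodule.torsion R (H ⧸ LinearMap.range φ) with hTdef
  haveI : NoZeroSMulDivisors R ((H ⧸ LinearMap.range φ) ⧸ T) :=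
    ⟨fun h => (Module.isTorsionFree_iff_smul_eq_zero.1 inferInstance _ _ h)⟩
  obtain ⟨k, ε, hε⟩ := exists_emb_free (R := R) (X := (H ⧸ LinearMap.range φ) ⧸ T)
  haveI hproj : Module.Projective R ((H ⧸ LinearMap.range φ) ⧸ T) :=
    projective_of_emb (projective_of_fg_submodule_pi hpruf k) ε hε
  obtain ⟨s, hs⟩ := Module.projective_lifting_property T.mkQ LinearMap.id T.mkQ_surjective
  have hss : ∀ y, T.mkQ (s y) = y := fun y => congrFun (congrArg DFunLike.coe hs) y
  refine ⟨LinearMap.range s, ?_, ?_, ?_⟩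
  · rw [eq_bot_iff]
    rintro x ⟨hxT, y, rfl⟩
    have h0 : T.mkQ (s y) = 0 := by
      rw [Submodule.mkQ_apply, Submodule.Quotient.mk_eq_zero]
      exact hxT
    have hy : y = 0 := by rw [← hss y, h0]
    rw [hy, map_zero]
    exact Submodule.mem_bot R |>.mpr rfl
  · rw [eq_top_iff]
    intro m _
    have h1 : m - s (T.mkQ m) ∈ T := by
      have h2 : T.mkQ (m - s (T.mkQ m)) = 0 := by rw [map_sub, hss, sub_self]
      rwa [Submodule.mkQ_apply, Submodule.Quotient.mk_eq_zero] at h2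
    rw [← sub_add_cancel m (s (T.mkQ m))]
    exact Submodule.add_mem _ (Submodule.mem_sup_left h1)
      (Submodule.mem_sup_right ⟨_, rfl⟩)
  · have hsinj : Function.Injective s := fun x y h => by rw [← hss x, ← hss y, h]
    exact Module.Projective.of_equiv (LinearEquiv.ofInjective s hsinj)
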